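/- arXiv:2102.13310 — 2 statements merged into one kernel-verified Lean document; each statement's English description precedes it below -/
import Mathlib

section
/- (Abstract form of Lemma 4.3.) For an abstract execution as in the context, assume additionally that any two distinct write operations possessing timestamps have distinct timestamps. Then the relation ↝ defined by Definition 4 is a strict partial order on operations: it is irreflexive, asymmetric, and transitive. -/
/-- The relation `↝` of Definition 4, for distinct operations `π₁ ≠ π₂`:
(a) both have timestamps and `ts π₁ < ts π₂`; or (b) both have timestamps,
`ts π₁ = ts π₂`, and `π₁` is a write; or (c) both have timestamps, `ts π₁ = ts π₂`,
both are reads of the same client, and `π₁ → π₂` in program order; or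
(d) `π₁` has a timestamp and `π₂` does not. -/
def leadsTo {Op Client : Type*} {N : ℕ} (write read : Op → Prop) (cl : Op → Client)
    (prog : Op → Op → Prop) (ts : Op → Option (Fin N → ℕ)) (π₁ π₂ : Op) : Prop :=
  π₁ ≠ π₂ ∧
    ((∃ u₁ u₂ : Fin N → ℕ, ts π₁ = some u₁ ∧ ts π₂ = some u₂ ∧
        (u₁ < u₂ ∨
          (u₁ = u₂ ∧ write π₁) ∨
          (u₁ = u₂ ∧ read π₁ ∧ read π₂ ∧ cl π₁ = cl π₂ ∧ prog π₁ π₂))) ∨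
      ((∃ u₁ : Fin N → ℕ, ts π₁ = some u₁) ∧ ts π₂ = none))

/-- Abstract form of Lemma 4.3: for an abstract execution in which any two distinct
write operations possessing timestamps have distinct timestamps, the relation `↝`
of Definition 4 is a strict partial order: irreflexive, asymmetric, and transitive. -/
theorem leadsTo_isStrictPartialOrder {Op Client : Type*} {N : ℕ}
    (write read : Op → Prop)
    (hwr : ∀ π : Op, (write π ∧ ¬ read π) ∨ (¬ write π ∧ read π))
    (cl : Op → Client)
    (prog : Op → Op → Prop)
    (hprog_asymm : ∀ π₁ π₂ : Op, prog π₁ π₂ → ¬ prog π₂ π₁)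
    (hprog_trans : ∀ π₁ π₂ π₃ : Op, prog π₁ π₂ → prog π₂ π₃ → prog π₁ π₃)
    (hprog_cl : ∀ π₁ π₂ : Op, prog π₁ π₂ → cl π₁ = cl π₂)
    (ts : Op → Option (Fin N → ℕ))
    (H1 : ∀ (π₁ π₂ : Op) (u₁ u₂ : Fin N → ℕ), write π₁ → write π₂ → π₁ ≠ π₂ →
      ts π₁ = some u₁ → ts π₂ = some u₂ → u₁ ≠ u₂) :
    (∀ π : Op, ¬ leadsTo write read cl prog ts π π) ∧
    (∀ π₁ π₂ : Op, leadsTo write read cl prog ts π₁ π₂ →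
      ¬ leadsTo write read cl prog ts π₂ π₁) ∧
    (∀ π₁ π₂ π₃ : Op, leadsTo write read cl prog ts π₁ π₂ →
      leadsTo write read cl prog ts π₂ π₃ → leadsTo write read cl prog ts π₁ π₃) := by
  have asym : ∀ π₁ π₂ : Op, leadsTo write read cl prog ts π₁ π₂ →
      ¬ leadsTo write read cl prog ts π₂ π₁ := by
    rintro π₁ π₂ ⟨hne, h⟩ ⟨-, h'⟩
    rcases h with ⟨u₁, u₂, h1, h2, hr⟩ | ⟨⟨u₁, h1⟩, h2⟩
    · rcases h' with ⟨v₂, v₁, h2', h1', hr'⟩ | ⟨_, h1'⟩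
      · rw [h1] at h1'; rw [h2] at h2'
        injection h1' with e1; injection h2' with e2
        subst e1; subst e2
        rcases hr with hlt | ⟨heq, hw⟩ | ⟨heq, hr1, hr2, _, hp⟩
        · rcases hr' with hlt' | ⟨heq', _⟩ | ⟨heq', _⟩
          · exact absurd hlt' (lt_asymm hlt)
          · exact absurd hlt (heq' ▸ lt_irrefl _)
          · exact absurd hlt (heq' ▸ lt_irrefl _)
        · rcases hr' with hlt' | ⟨heq', hw'⟩ | ⟨heq', hr2', hr1', _, _⟩
          · exact absurd hlt' (heq ▸ lt_irrefl _)
          · exact H1 π₁ π₂ u₁ u₂ hw hw' hne h1 h2 heq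
          · rcases hwr π₁ with ⟨_, hnr⟩ | ⟨hnw, _⟩
            · exact hnr hr1'
            · exact hnw hw
        · rcases hr' with hlt' | ⟨heq', hw'⟩ | ⟨heq', _, _, _, hp'⟩
          · exact absurd hlt' (heq ▸ lt_irrefl _)
          · rcases hwr π₂ with ⟨_, hnr⟩ | ⟨hnw, _⟩
            · exact hnr hr2
            · exact hnw hw'
          · exact hprog_asymm π₁ π₂ hp hp'
      · rw [h1] at h1'; exact Option.some_ne_none _ h1'
    · rcases h' with ⟨v₂, v₁, h2', _, _⟩ | ⟨⟨v₂, h2'⟩, _⟩ <;>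
        (rw [h2] at h2'; exact Option.some_ne_none _ h2'.symm)
  refine ⟨fun π h => h.1 rfl, asym, ?_⟩
  rintro π₁ π₂ π₃ h12 h23
  have hne13 : π₁ ≠ π₃ := by
    rintro rfl; exact asym π₁ π₂ h12 h23
  obtain ⟨hne12, h⟩ := h12
  obtain ⟨hne23, h'⟩ := h23
  refine ⟨hne13, ?_⟩
  rcases h with ⟨u₁, u₂, h1, h2, hr⟩ | ⟨⟨u₁, h1⟩, h2⟩
  · rcases h' with ⟨v₂, u₃, h2', h3, hr'⟩ | ⟨_, h3⟩
    · rw [h2] at h2'; injection h2' with e; subst e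
      refine Or.inl ⟨u₁, u₃, h1, h3, ?_⟩
      rcases hr with hlt | ⟨heq, hw⟩ | ⟨heq, hr1, hr2, hcl, hp⟩
      · rcases hr' with hlt' | ⟨heq', _⟩ | ⟨heq', _⟩
        · exact Or.inl (hlt.trans hlt')
        · exact Or.inl (heq' ▸ hlt)
        · exact Or.inl (heq' ▸ hlt)
      · rcases hr' with hlt' | ⟨heq', _⟩ | ⟨heq', _⟩
        · exact Or.inl (heq ▸ hlt')
        · exact Or.inr (Or.inl ⟨heq.trans heq', hw⟩)
        · exact Or.inr (Or.inl ⟨heq.trans heq', hw⟩)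
      · rcases hr' with hlt' | ⟨heq', hw'⟩ | ⟨heq', hr2', hr3, hcl', hp'⟩
        · exact Or.inl (heq ▸ hlt')
        · rcases hwr π₂ with ⟨_, hnr⟩ | ⟨hnw, _⟩
          · exact absurd hr2 hnr
          · exact absurd hw' hnw
        · exact Or.inr (Or.inr ⟨heq.trans heq', hr1, hr3, hcl.trans hcl',
            hprog_trans π₁ π₂ π₃ hp hp'⟩)
    · exact Or.inr ⟨⟨u₁, h1⟩, h3⟩
  · rcases h' with ⟨v₂, u₃, h2', _, _⟩ | ⟨⟨v₂, h2'⟩, _⟩ <;>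
      (rw [h2] at h2'; exact (Option.some_ne_none _ h2'.symm).elim)
end

section
/- (Abstract form of Theorem 4.1: CausalEC satisfies causal consistency, with the algorithm-derived facts taken as hypotheses.) For an abstract execution as in the context, equipped additionally with functions obj (the object of an operation) and val (the value written by a write or returned by a read), assume: (H1) any two distinct write operations possessing timestamps have distinct timestamps; (H2) whenever π₁ → π₂, the operation π₁ has a timestamp, and if π₂ also has a timestamp then ts(π₁) ≤ ts(π₂), and moreover ts(π₁) = ts(π₂) implies that π₂ is a read; (H3) every read π possessing a timestamp satisfies: there exists a write φ possessing a timestamp with obj(φ) = obj(π), val(φ) = val(π), and ts(φ) ≤ ts(π). Then the relation ↝ of Definition 4 witnesses causal consistency: (1) π₁ → π₂ implies π₁ ↝ π₂; and (2) for every read π₁ possessing a timestamp there exists a write π₂ such that obj(π₂) = obj(π₁), val(π₂) = val(π₁), π₂ ↝ π₁, and for every write π₃ with π₂ ↝ π₃ ↝ π₁ it is not the case that both obj(π₃) = obj(π₁) and val(π₃) = val(π₁). (The proof of (2) uses that the set of writes to obj(π₁) with value val(π₁) and timestamp ≤ ts(π₁) is nonempty by (H3) and finite, since timestamps of distinct writes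 are distinct elements of ℕ^N bounded above by ts(π₁); a timestamp-maximal element of this set serves as π₂.) -/
/-- Abstract form of Theorem 4.1 (CausalEC satisfies causal consistency): under the
algorithm-derived hypotheses (H1)-(H3), the relation `↝` of Definition 4 witnesses
causal consistency: (1) program order implies `↝`; and (2) every read possessing a
timestamp returns the value of a write `π₂` with `π₂ ↝ π₁`, on the same object with
the same value, such that no write `π₃` with `π₂ ↝ π₃ ↝ π₁` is on the same object
with the same value. -/
theorem causalEC_causally_consistent {Op Client X V : Type*} {N : ℕ}
    (write read : Op → Prop)
    (hwr : ∀ π : Op, (write π ∧ ¬ read π) ∨ (¬ write π ∧ read π))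
    (cl : Op → Client)
    (prog : Op → Op → Prop)
    (hprog_asymm : ∀ π₁ π₂ : Op, prog π₁ π₂ → ¬ prog π₂ π₁)
    (hprog_trans : ∀ π₁ π₂ π₃ : Op, prog π₁ π₂ → prog π₂ π₃ → prog π₁ π₃)
    (hprog_cl : ∀ π₁ π₂ : Op, prog π₁ π₂ → cl π₁ = cl π₂)
    (ts : Op → Option (Fin N → ℕ))
    (obj : Op → X) (val : Op → V)
    (H1 : ∀ (π₁ π₂ : Op) (u₁ u₂ : Fin N → ℕ), write π₁ → write π₂ → π₁ ≠ π₂ →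
      ts π₁ = some u₁ → ts π₂ = some u₂ → u₁ ≠ u₂)
    (H2 : ∀ π₁ π₂ : Op, prog π₁ π₂ →
      ∃ u₁ : Fin N → ℕ, ts π₁ = some u₁ ∧
        ∀ u₂ : Fin N → ℕ, ts π₂ = some u₂ → u₁ ≤ u₂ ∧ (u₁ = u₂ → read π₂))
    (H3 : ∀ π : Op, read π → ∀ u : Fin N → ℕ, ts π = some u →
      ∃ (φ : Op) (uφ : Fin N → ℕ), write φ ∧ ts φ = some uφ ∧
        obj φ = obj π ∧ val φ = val π ∧ uφ ≤ u) :
    (∀ π₁ π₂ : Op, prog π₁ π₂ → leadsTo write read cl prog ts π₁ π₂) ∧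
    (∀ (π₁ : Op) (u : Fin N → ℕ), read π₁ → ts π₁ = some u →
      ∃ π₂ : Op, write π₂ ∧ obj π₂ = obj π₁ ∧ val π₂ = val π₁ ∧
        leadsTo write read cl prog ts π₂ π₁ ∧
        ∀ π₃ : Op, write π₃ → leadsTo write read cl prog ts π₂ π₃ →
          leadsTo write read cl prog ts π₃ π₁ →
          ¬ (obj π₃ = obj π₁ ∧ val π₃ = val π₁)) := by

  constructor
  · intro π₁ π₂ hp
    obtain ⟨u₁, hts₁, h2⟩ := H2 π₁ π₂ hp
    have hne : π₁ ≠ π₂ := fun h => hprog_asymm π₁ π₂ hp (h ▸ hp)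
    refine ⟨hne, ?_⟩
    cases hts2 : ts π₂ with
    | none => exact Or.inr ⟨⟨u₁, hts₁⟩, rfl⟩
    | some u₂ =>
      obtain ⟨hle, himp⟩ := h2 u₂ hts2
      left
      refine ⟨u₁, u₂, hts₁, rfl, ?_⟩
      rcases lt_or_eq_of_le hle with h | h
      · exact Or.inl h
      · rcases hwr π₁ with ⟨hw, -⟩ | ⟨-, hrd⟩
        · exact Or.inr (Or.inl ⟨h, hw⟩)
        · exact Or.inr (Or.inr ⟨h, hrd, himp h, hprog_cl _ _ hp, hp⟩)
  · intro π₁ u hr hts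
    obtain ⟨φ, uφ, hwφ, htsφ, hobjφ, hvalφ, hleφ⟩ := H3 π₁ hr u hts
    set T : Set (Fin N → ℕ) :=
      {v | v ≤ u ∧ ∃ ψ, write ψ ∧ ts ψ = some v ∧ obj ψ = obj π₁ ∧ val ψ = val π₁} with hT
    have hTfin : T.Finite := (Set.finite_Iic u).subset fun v hv => hv.1
    have hTne : T.Nonempty := ⟨uφ, hleφ, φ, hwφ, htsφ, hobjφ, hvalφ⟩
    obtain ⟨v, hvT, hvmax⟩ : ∃ a ∈ T, ∀ a' ∈ T, id a ≤ id a' → id a = id a' := by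
      obtain ⟨a, haT, hamax⟩ := hTfin.exists_maximalFor id T hTne
      exact ⟨a, haT, fun a' ha' hle => le_antisymm hle (hamax ha' hle)⟩
    obtain ⟨hvle, π₂, hwπ₂, hts₂, hobj₂, hval₂⟩ := hvT
    have hne₂₁ : π₂ ≠ π₁ := by
      intro h
      rcases hwr π₁ with ⟨_, hnr⟩ | ⟨hnw, _⟩
      · exact hnr hr
      · exact hnw (h ▸ hwπ₂)
    refine ⟨π₂, hwπ₂, hobj₂, hval₂, ⟨hne₂₁, Or.inl ⟨v, u, hts₂, hts, ?_⟩⟩, ?_⟩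
    · rcases lt_or_eq_of_le hvle with h | h
      · exact Or.inl h
      · exact Or.inr (Or.inl ⟨h, hwπ₂⟩)
    · rintro π₃ hw₃ ⟨hne₂₃, h23⟩ ⟨hne₃₁, h31⟩ ⟨hobj₃, hval₃⟩
      rcases h23 with ⟨v₂, u₃, hv₂, hu₃, hcase⟩ | ⟨-, hnone⟩
      · rw [hts₂] at hv₂
        injection hv₂ with hv₂
        subst hv₂
        -- derive u₃ ≤ u from h31
        have hu₃le : u₃ ≤ u := by
          rcases h31 with ⟨w₁, w₂, hw1, hw2, hc⟩ | ⟨-, hn⟩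
          · rw [hu₃] at hw1
            injection hw1 with hw1
            rw [hts] at hw2
            injection hw2 with hw2
            subst hw1; subst hw2
            rcases hc with h | ⟨h, -⟩ | ⟨-, hr₃, -⟩
            · exact le_of_lt h
            · exact le_of_eq h
            · rcases hwr π₃ with ⟨-, hnr⟩ | ⟨hnw, -⟩
              · exact absurd hr₃ hnr
              · exact absurd hw₃ hnw
          · rw [hts] at hn; cases hn
        have hu₃T : u₃ ∈ T := ⟨hu₃le, π₃, hw₃, hu₃, hobj₃, hval₃⟩
        rcases hcase with h | ⟨h, -⟩ | ⟨-, hr₂, -⟩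
        · exact absurd (hvmax u₃ hu₃T (le_of_lt h)) (ne_of_lt h)
        · exact H1 π₂ π₃ v u₃ hwπ₂ hw₃ hne₂₃ hts₂ hu₃ h
        · rcases hwr π₂ with ⟨-, hnr⟩ | ⟨hnw, -⟩
          · exact hnr hr₂
          · exact hnw hwπ₂
      · rcases h31 with ⟨w₁, w₂, hw1, -⟩ | ⟨⟨w, hw⟩, -⟩
        · rw [hnone] at hw1; cases hw1
        · rw [hnone] at hw; cases hw
end
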